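/- Let ε ∈ [0, 1/2] and suppose A ∈ K^{N×n} with rows a_1^*, ..., a_N^* (all a_i ≠ 0) satisfies (1−ε) ||x||_2^{2k} ≤ ∑_{i=1}^N |⟨a_i, x⟩|^{2k} ≤ (1+ε) ||x||_2^{2k} for all x ∈ K^n. Set x_i = a_i/||a_i||_2, S = ∑_i ||a_i||_2^{2k}, and τ_i = ||a_i||_2^{2k}/S. Then ∑_{i,j=1}^N τ_i τ_j |⟨x_i, x_j⟩|^{2k} ≤ (1 + 4ε) δ, where δ = ∫_S |⟨x,y⟩|^{2k} dσ(y) for the rotation-invariant probability measure σ on the unit sphere of l_2^n(K). -/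

import Mathlib

open MeasureTheory

/-- From an almost isometric `ℓ₂ → ℓ_{2k}` embedding with rows `aᵢ*` (accuracy
`ε ∈ [0, 1/2]`), the normalized vectors `xᵢ = aᵢ/‖aᵢ‖` with weights
`τᵢ = ‖aᵢ‖^{2k}/S`, `S = ∑ᵢ ‖aᵢ‖^{2k}`, satisfy
`∑ᵢⱼ τᵢτⱼ |⟨xᵢ,xⱼ⟩|^{2k} ≤ (1 + 4ε) δ`. -/
theorem stmt16 {𝕜 : Type} [RCLike 𝕜] (n k N : ℕ) (hk : 1 ≤ k)
    [MeasurableSpace (EuclideanSpace 𝕜 (Fin n))] [BorelSpace (EuclideanSpace 𝕜 (Fin n))]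
    (σ : Measure (EuclideanSpace 𝕜 (Fin n))) [IsProbabilityMeasure σ]
    (hσ : ∀ᵐ y ∂σ, ‖y‖ = 1) (δ : ℝ)
    (hδ : ∀ x : EuclideanSpace 𝕜 (Fin n), ‖x‖ = 1 →
      ∫ y, ‖(inner 𝕜 x y : 𝕜)‖ ^ (2 * k) ∂σ = δ)
    (ε : ℝ) (hε : ε ∈ Set.Icc (0 : ℝ) (1 / 2))
    (a : Fin N → EuclideanSpace 𝕜 (Fin n)) (ha : ∀ i, a i ≠ 0)
    (hiso : ∀ z : EuclideanSpace 𝕜 (Fin n),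
      (1 - ε) * ‖z‖ ^ (2 * k) ≤ ∑ i, ‖(inner 𝕜 (a i) z : 𝕜)‖ ^ (2 * k) ∧
      ∑ i, ‖(inner 𝕜 (a i) z : 𝕜)‖ ^ (2 * k) ≤ (1 + ε) * ‖z‖ ^ (2 * k))
    (x : Fin N → EuclideanSpace 𝕜 (Fin n)) (hx : ∀ i, x i = ‖a i‖⁻¹ • a i)
    (S : ℝ) (hS : S = ∑ i, ‖a i‖ ^ (2 * k))
    (τ : Fin N → ℝ) (hτ : ∀ i, τ i = ‖a i‖ ^ (2 * k) / S) :
    ∑ i, ∑ j, τ i * τ j * ‖(inner 𝕜 (x i) (x j) : 𝕜)‖ ^ (2 * k) ≤ (1 + 4 * ε) * δ := by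
  obtain ⟨hε0, hε2⟩ := hε
  have hanorm : ∀ i, (0:ℝ) < ‖a i‖ := fun i => norm_pos_iff.2 (ha i)
  have hxnorm : ∀ i, ‖x i‖ = 1 := by
    intro i
    rw [hx i, norm_smul, norm_inv, norm_norm, inv_mul_cancel₀ (hanorm i).ne']
  have hinner : ∀ i (y : EuclideanSpace 𝕜 (Fin n)), ‖(inner 𝕜 (a i) y : 𝕜)‖ ^ (2*k)
      = ‖a i‖ ^ (2*k) * ‖(inner 𝕜 (x i) y : 𝕜)‖ ^ (2*k) := by
    intro i y
    have hB : (‖a i‖ : ℝ) ≠ 0 := (hanorm i).ne'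
    have h2 : ‖(inner 𝕜 (x i) y : 𝕜)‖ = ‖a i‖⁻¹ * ‖(inner 𝕜 (a i) y : 𝕜)‖ := by
      rw [hx i, RCLike.real_smul_eq_coe_smul (K := 𝕜), inner_smul_left, norm_mul,
        RCLike.norm_conj, RCLike.norm_ofReal, abs_of_pos (inv_pos.2 (hanorm i))]
    rw [h2, mul_pow, inv_pow, ← mul_assoc, mul_inv_cancel₀ (pow_ne_zero _ hB), one_mul]
  have hfi : ∀ i, Integrable (fun y => ‖(inner 𝕜 (x i) y : 𝕜)‖ ^ (2*k)) σ := by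
    intro i
    refine (integrable_const (1:ℝ)).mono'
      (((innerSL 𝕜 (x i)).continuous.norm).pow _).aestronglyMeasurable ?_
    filter_upwards [hσ] with y hy
    rw [Real.norm_eq_abs, abs_of_nonneg (by positivity)]
    calc ‖(inner 𝕜 (x i) y : 𝕜)‖ ^ (2*k) ≤ (‖x i‖ * ‖y‖)^(2*k) :=
          pow_le_pow_left₀ (norm_nonneg _) (norm_inner_le_norm _ _) _
      _ = 1 := by rw [hxnorm i, hy]; simp
  have hgint : ∀ i, Integrable (fun y => ‖(inner 𝕜 (a i) y : 𝕜)‖^(2*k)) σ := by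
    intro i
    simp only [hinner]
    exact (hfi i).const_mul _
  have hSδ : 1 - ε ≤ S * δ := by
    have h2 : ∫ y, ∑ i, ‖(inner 𝕜 (a i) y : 𝕜)‖^(2*k) ∂σ = S * δ := by
      rw [integral_finset_sum _ (fun i _ => hgint i)]
      have h3 : ∀ i, ∫ y, ‖(inner 𝕜 (a i) y : 𝕜)‖^(2*k) ∂σ = ‖a i‖^(2*k) * δ := by
        intro i
        simp only [hinner]
        rw [integral_const_mul, hδ (x i) (hxnorm i)]
      rw [Finset.sum_congr rfl (fun i _ => h3 i), ← Finset.sum_mul, hS]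
    calc (1-ε:ℝ) = ∫ _, (1-ε) ∂σ := by simp
      _ ≤ ∫ y, ∑ i, ‖(inner 𝕜 (a i) y : 𝕜)‖^(2*k) ∂σ := by
          refine integral_mono_ae (integrable_const _)
            (integrable_finset_sum _ (fun i _ => hgint i)) ?_
          filter_upwards [hσ] with y hy
          have h4 := (hiso y).1
          rwa [hy, one_pow, mul_one] at h4
      _ = S * δ := h2
  have hSnonneg : 0 ≤ S := by rw [hS]; positivity
  have hSpos : 0 < S := by
    rcases hSnonneg.lt_or_eq with h | h
    · exact h
    · exfalso; rw [← h, zero_mul] at hSδ; linarith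
  have hδpos : 0 < δ := by
    by_contra h
    push_neg at h
    nlinarith
  have hτnn : ∀ j, 0 ≤ τ j := fun j => by rw [hτ]; positivity
  have hτsum : ∑ j, τ j = 1 := by
    simp only [hτ]
    rw [← Finset.sum_div, ← hS, div_self hSpos.ne']
  have hrow : ∀ j, ∑ i, τ i * τ j * ‖(inner 𝕜 (x i) (x j):𝕜)‖^(2*k) ≤ τ j * ((1+ε)/S) := by
    intro j
    have h1 := (hiso (x j)).2
    rw [hxnorm j, one_pow, mul_one] at h1
    have h2 : ∑ i, ‖a i‖^(2*k) * ‖(inner 𝕜 (x i) (x j):𝕜)‖^(2*k) ≤ 1+ε := by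
      calc ∑ i, ‖a i‖^(2*k) * ‖(inner 𝕜 (x i) (x j):𝕜)‖^(2*k)
          = ∑ i, ‖(inner 𝕜 (a i) (x j):𝕜)‖^(2*k) :=
            Finset.sum_congr rfl (fun i _ => (hinner i (x j)).symm)
        _ ≤ 1+ε := h1
    calc ∑ i, τ i * τ j * ‖(inner 𝕜 (x i) (x j):𝕜)‖^(2*k)
        = (τ j / S) * ∑ i, ‖a i‖^(2*k) * ‖(inner 𝕜 (x i) (x j):𝕜)‖^(2*k) := by
          rw [Finset.mul_sum]
          refine Finset.sum_congr rfl fun i _ => ?_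
          rw [hτ i]
          field_simp
      _ ≤ (τ j / S) * (1+ε) := by
          refine mul_le_mul_of_nonneg_left h2 ?_
          exact div_nonneg (hτnn j) hSnonneg
      _ = τ j * ((1+ε)/S) := by ring
  calc ∑ i, ∑ j, τ i * τ j * ‖(inner 𝕜 (x i) (x j) : 𝕜)‖ ^ (2 * k)
      = ∑ j, ∑ i, τ i * τ j * ‖(inner 𝕜 (x i) (x j) : 𝕜)‖ ^ (2 * k) := Finset.sum_comm
    _ ≤ ∑ j, τ j * ((1+ε)/S) := Finset.sum_le_sum (fun j _ => hrow j)
    _ = (1+ε)/S := by rw [← Finset.sum_mul, hτsum, one_mul]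
    _ ≤ (1 + 4*ε) * δ := by
        rw [div_le_iff₀ hSpos]
        nlinarith [mul_nonneg (by linarith : (0:ℝ) ≤ 1+4*ε) (by linarith : (0:ℝ) ≤ S*δ - (1-ε))]
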